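/- Let k and m be nonnegative integers, b ∈ ℝ^n, and let β : ℝ^n → ℝ and h₁, h₂ : ℝ^n → ℝ^m be maps of class C^k on a neighborhood of b. Assume β(b) = 0 and all partial derivatives of β of orders 1 through k vanish at b (equivalently, the iterated derivatives of β of orders 1,…,k at b are zero). Then for every i with 0 ≤ i ≤ k, the i-th iterated derivative at b of the map x ↦ β(x)·h₁(x) + (1 − β(x))·h₂(x) equals the i-th iterated derivative of h₂ at b. -/

import Mathlib

open ContinuousLinearMap

universe u

/-- If `f` has all iterated derivatives (within `s`) of orders `0,…,n` vanishing at `x`,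
then the `n`-th derivative of `y ↦ B (f y) (g y)` vanishes at `x`. -/
theorem aux_bilinear_flat {Du Eu Fu Gu : Type u}
    [NormedAddCommGroup Du] [NormedSpace ℝ Du] [NormedAddCommGroup Eu] [NormedSpace ℝ Eu]
    [NormedAddCommGroup Fu] [NormedSpace ℝ Fu] [NormedAddCommGroup Gu] [NormedSpace ℝ Gu]
    (B : Eu →L[ℝ] Fu →L[ℝ] Gu) {f : Du → Eu} {g : Du → Fu} {n : ℕ} {s : Set Du} {x : Du}
    (hf : ContDiffOn ℝ n f s) (hg : ContDiffOn ℝ n g s) (hs : UniqueDiffOn ℝ s) (hx : x ∈ s)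
    (hflat : ∀ i : ℕ, i ≤ n → iteratedFDerivWithin ℝ i f s x = 0) :
    iteratedFDerivWithin ℝ n (fun y => B (f y) (g y)) s x = 0 := by
  induction' n with n IH generalizing Eu Fu Gu
  · have hf0 : f x = 0 := by
      have := congrFun (congrArg DFunLike.coe (hflat 0 le_rfl)) 0
      simpa [iteratedFDerivWithin_zero_apply] using this
    ext m
    simp [iteratedFDerivWithin_zero_apply, hf0]
  · have In : (n : WithTop ℕ∞) + 1 ≤ n + 1 := by exact_mod_cast le_rfl
    have hle : ((n : ℕ) : WithTop ℕ∞) ≤ (n + 1 : ℕ) := by exact_mod_cast Nat.le_succ n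
    -- derivative of f is flat to order n
    have hflat' : ∀ i : ℕ, i ≤ n →
        iteratedFDerivWithin ℝ i (fun y => fderivWithin ℝ f s y) s x = 0 := by
      intro i hi
      have h0 := hflat (i + 1) (Nat.succ_le_succ hi)
      rw [iteratedFDerivWithin_succ_eq_comp_right hs hx] at h0
      have := congrArg (continuousMultilinearCurryRightEquiv' ℝ i Du Eu) h0
      simpa using this.trans (continuousMultilinearCurryRightEquiv' ℝ i Du Eu).map_zero
    have J : iteratedFDerivWithin ℝ (n + 1) (fun y => B (f y) (g y)) s x = 0 ↔
        iteratedFDerivWithin ℝ n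
          (fun y => fderivWithin ℝ (fun y : Du => B (f y) (g y)) s y) s x = 0 := by
      rw [iteratedFDerivWithin_succ_eq_comp_right hs hx]
      simp only [Function.comp_apply]
      constructor
      · intro h
        have := congrArg (continuousMultilinearCurryRightEquiv' ℝ n Du Gu) h
        simpa using this.trans (continuousMultilinearCurryRightEquiv' ℝ n Du Gu).map_zero
      · intro h; rw [h]; exact (continuousMultilinearCurryRightEquiv' ℝ n Du Gu).symm.map_zero
    rw [J]
    have Jc : iteratedFDerivWithin ℝ n
        (fun y : Du => fderivWithin ℝ (fun y : Du => B (f y) (g y)) s y) s x =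
          iteratedFDerivWithin ℝ n (fun y => B.precompR Du (f y)
            (fderivWithin ℝ g s y) + B.precompL Du (fderivWithin ℝ f s y) (g y)) s x := by
      apply iteratedFDerivWithin_congr (fun y hy => ?_) hx
      have L : ((n + 1 : ℕ) : WithTop ℕ∞) ≠ 0 := by
        exact_mod_cast Nat.succ_ne_zero n
      exact B.fderivWithin_of_bilinear (hf.differentiableOn L y hy) (hg.differentiableOn L y hy)
        (hs y hy)
    rw [Jc]
    have A : ContDiffOn ℝ n (fun y => B.precompR Du (f y) (fderivWithin ℝ g s y)) s :=
      (B.precompR Du).isBoundedBilinearMap.contDiff.comp₂_contDiffOn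
        (hf.of_le hle) (hg.fderivWithin hs In)
    have A' : ContDiffOn ℝ n (fun y => B.precompL Du (fderivWithin ℝ f s y) (g y)) s :=
      (B.precompL Du).isBoundedBilinearMap.contDiff.comp₂_contDiffOn (hf.fderivWithin hs In)
        (hg.of_le hle)
    rw [iteratedFDerivWithin_add_apply' (A x hx) (A' x hx) hs hx]
    rw [IH (B.precompR Du) (hf.of_le hle) (hg.fderivWithin hs In)
      (fun i hi => hflat i (hi.trans (Nat.le_succ n))),
      IH (B.precompL Du) (hf.fderivWithin hs In) (hg.of_le hle) hflat']
    simp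

/-- If `β : ℝⁿ → ℝ` and `h₁, h₂ : ℝⁿ → ℝ^m` are of class `C^k` on a
neighborhood of `b`, `β b = 0`, and all iterated derivatives of `β` of orders `1,…,k`
vanish at `b`, then for `0 ≤ i ≤ k` the `i`-th iterated derivative at `b` of
`x ↦ β x • h₁ x + (1 − β x) • h₂ x` equals that of `h₂`. -/
theorem stmt11 (n m k : ℕ) (b : Fin n → ℝ) (V : Set (Fin n → ℝ)) (hV : IsOpen V)
    (hb : b ∈ V) (β : (Fin n → ℝ) → ℝ) (h₁ h₂ : (Fin n → ℝ) → (Fin m → ℝ))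
    (hβ : ContDiffOn ℝ k β V) (hh₁ : ContDiffOn ℝ k h₁ V) (hh₂ : ContDiffOn ℝ k h₂ V)
    (hβb : β b = 0)
    (hflat : ∀ i : ℕ, 1 ≤ i → i ≤ k → iteratedFDeriv ℝ i β b = 0) :
    ∀ i : ℕ, i ≤ k →
      iteratedFDeriv ℝ i (fun x => β x • h₁ x + (1 - β x) • h₂ x) b =
        iteratedFDeriv ℝ i h₂ b := by
  intro i hik
  have hs : UniqueDiffOn ℝ V := hV.uniqueDiffOn
  have hik' : ((i : ℕ) : WithTop ℕ∞) ≤ (k : ℕ) := by exact_mod_cast hik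
  have hβi : ContDiffOn ℝ i β V := hβ.of_le hik'
  have hh₁i : ContDiffOn ℝ i h₁ V := hh₁.of_le hik'
  have hh₂i : ContDiffOn ℝ i h₂ V := hh₂.of_le hik'
  -- rewrite the function as  β • (h₁ - h₂) + h₂
  have hfun : (fun x => β x • h₁ x + (1 - β x) • h₂ x) =
      fun x => (ContinuousLinearMap.lsmul ℝ ℝ (β x)) (h₁ x - h₂ x) + h₂ x := by
    funext x
    simp [ContinuousLinearMap.lsmul_apply, smul_sub, sub_smul]
    abel
  rw [hfun, ← iteratedFDerivWithin_of_isOpen i hV hb, ← iteratedFDerivWithin_of_isOpen i hV hb]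
  have hd : ContDiffOn ℝ i (fun x => h₁ x - h₂ x) V := hh₁i.sub hh₂i
  have hprod : ContDiffOn ℝ i
      (fun x => (ContinuousLinearMap.lsmul ℝ ℝ (β x)) (h₁ x - h₂ x)) V :=
    (ContinuousLinearMap.lsmul ℝ ℝ).isBoundedBilinearMap.contDiff.comp₂_contDiffOn hβi hd
  rw [iteratedFDerivWithin_add_apply' (hprod b hb) (hh₂i b hb) hs hb]
  have hβflat : ∀ j : ℕ, j ≤ i → iteratedFDerivWithin ℝ j β V b = 0 := by
    intro j hj
    rw [iteratedFDerivWithin_of_isOpen j hV hb]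
    rcases Nat.eq_zero_or_pos j with rfl | hj0
    · ext mm; simp [iteratedFDeriv_zero_apply, hβb]
    · exact hflat j hj0 (hj.trans hik)
  rw [aux_bilinear_flat (ContinuousLinearMap.lsmul ℝ ℝ) hβi hd hs hb hβflat]
  simp
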